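/- Let f ∈ MvPowerSeries ℕ K be such that (bounded degree) there exists D with ∑_i d_i ≤ D for every exponent d with coeff_f(d) ≠ 0, and (almost symmetric of level k) there exists k ≥ 0 such that for every i ≥ k and every exponent d one has coeff_f(d ∘ σ_i) = coeff_f(d), where σ_i is the transposition of ℕ exchanging i and i+1. Then f is a finite K-linear combination of almost symmetric monomials m_{(λ|μ)}, and moreover one can take all the strict compositions λ occurring to have length at most k. -/

import Mathlib

/-!
Almost symmetric monomials in `MvPowerSeries ℕ K`.
-/

noncomputable section

/-- A strict composition: a finite tuple of nonnegative integers whose last entry (if any)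
is positive. -/
def StrictComp : Type := {l : List ℕ // ∀ h : l ≠ [], l.getLast h ≠ 0}

/-- A partition: a weakly decreasing finite tuple of positive integers. -/
def PartitionL : Type := {l : List ℕ // l.Pairwise (· ≥ ·) ∧ ∀ x ∈ l, 0 < x}

open Classical in
/-- The almost symmetric monomial `m_{(λ|μ)}`: its coefficient at an exponent `d : ℕ →₀ ℕ`
is `1` if `d_i = λ_i` for all `i < ℓ(λ)` and the multiset of nonzero values `d_j`, `j ≥ ℓ(λ)`
(with multiplicity), equals the multiset of parts of `μ`; and `0` otherwise. -/
def asm (K : Type*) [Field K] (lam mu : List ℕ) : MvPowerSeries ℕ K :=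
  fun d : ℕ →₀ ℕ =>
    if (∀ i : ℕ, ∀ h : i < lam.length, d i = lam.get ⟨i, h⟩) ∧
        (d.support.filter (fun j => lam.length ≤ j)).val.map d = (↑mu : Multiset ℕ) then
      (1 : K)
    else 0

namespace AsmAux
open MvPowerSeries

def headL (k : ℕ) (d : ℕ →₀ ℕ) : List ℕ := List.ofFn fun i : Fin k => d i

def tailMS (k : ℕ) (d : ℕ →₀ ℕ) : Multiset ℕ :=
  ((d.support.filter fun j => k ≤ j).val).map d

def E (K : Type*) [Field K] (k : ℕ) (l : List ℕ) (m : Multiset ℕ) : MvPowerSeries ℕ K :=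
  fun d => if headL k d = l ∧ tailMS k d = m then 1 else 0

def bplus (b : List ℕ) : Multiset ℕ := (↑b : Multiset ℕ).filter (· ≠ 0)

def window (l z : ℕ) (d : ℕ →₀ ℕ) : List ℕ := List.ofFn fun i : Fin z => d (l + i)

theorem headL_split (l z : ℕ) (d : ℕ →₀ ℕ) :
    headL (l + z) d = headL l d ++ window l z d := by
  rw [headL, List.ofFn_add]
  rfl

theorem tail_split (l z : ℕ) (d : ℕ →₀ ℕ) :
    tailMS l d = bplus (window l z d) + tailMS (l + z) d := by
  -- step 1 : split the filtered support multiset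
  have step1 : ((d.support.filter fun j => l ≤ j).val)
      = (d.support.val.filter fun j => l ≤ j ∧ j < l + z)
        + (d.support.val.filter fun j => l + z ≤ j) := by
    rw [Finset.filter_val]
    rw [Multiset.filter_add_filter]
    have h1 : (Multiset.filter (fun j => (l ≤ j ∧ j < l + z) ∨ l + z ≤ j) d.support.val)
        = Multiset.filter (fun j => l ≤ j) d.support.val := by
      apply Multiset.filter_congr
      intro x _
      constructor
      · rintro (⟨h, _⟩ | h) <;> omega
      · intro h; omega
    have h2 : (Multiset.filter (fun j => (l ≤ j ∧ j < l + z) ∧ l + z ≤ j) d.support.val)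
        = 0 := by
      rw [Multiset.filter_eq_nil]
      intro a _ h
      omega
    rw [h1, h2, add_zero]
  have step2 : Multiset.map d (d.support.val.filter fun j => l ≤ j ∧ j < l + z)
      = bplus (window l z d) := by
    have hofn : (↑(window l z d) : Multiset ℕ)
        = Multiset.map (fun i : Fin z => d (l + ↑i)) ↑(List.finRange z) := by
      rw [window, List.ofFn_eq_map, Multiset.map_coe]
    have hmm : Multiset.map (fun i : Fin z => d (l + ↑i)) (↑(List.finRange z) : Multiset (Fin z))
        = Multiset.map d (Multiset.map (fun i : Fin z => l + ↑i) ↑(List.finRange z)) := by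
      rw [Multiset.map_map]
      rfl
    rw [bplus, hofn, hmm, Multiset.filter_map]
    have hset : Multiset.filter (fun j => (· ≠ 0) (d j))
          (Multiset.map (fun i : Fin z => l + ↑i) ↑(List.finRange z))
        = d.support.val.filter fun j => l ≤ j ∧ j < l + z := by
      apply Multiset.Nodup.ext ?_ ?_ |>.mpr
      · intro a
        simp only [Multiset.mem_filter, Multiset.mem_map, Multiset.mem_coe,
          List.mem_finRange, Finset.mem_val, Finsupp.mem_support_iff]
        constructor
        · rintro ⟨⟨i, _, rfl⟩, h0⟩
          exact ⟨h0, Nat.le_add_right _ _, by omega⟩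
        · rintro ⟨h0, h1, h2⟩
          exact ⟨⟨⟨a - l, by omega⟩, trivial, by simp; omega⟩, h0⟩
      · apply Multiset.Nodup.filter
        apply Multiset.Nodup.map
        · intro x y hxy
          dsimp only at hxy
          apply Fin.ext
          omega
        · exact Multiset.coe_nodup.mpr (List.nodup_finRange z)
      · exact Multiset.Nodup.filter _ d.support.nodup
    exact (congrArg (Multiset.map (d : ℕ → ℕ)) hset.symm : _)
  rw [tailMS, step1, Multiset.map_add, step2, tailMS, Finset.filter_val]

theorem coeff_E {K : Type*} [Field K] (k : ℕ) (l : List ℕ) (m : Multiset ℕ) (d : ℕ →₀ ℕ) :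
    MvPowerSeries.coeff d (E K k l m) = if headL k d = l ∧ tailMS k d = m then 1 else 0 := rfl

def W (z S : ℕ) (m : Multiset ℕ) : Finset (List ℕ) :=
  (Finset.univ.image fun u : Fin z → Fin (S+1) => List.ofFn fun i => (u i : ℕ)).filter
    fun b => bplus b ≤ m

theorem length_of_mem_W {z S : ℕ} {m : Multiset ℕ} {b : List ℕ} (hb : b ∈ W z S m) :
    b.length = z := by
  rw [W, Finset.mem_filter, Finset.mem_image] at hb
  obtain ⟨⟨u, _, rfl⟩, _⟩ := hb
  simp

theorem bplus_le_of_mem_W {z S : ℕ} {m : Multiset ℕ} {b : List ℕ} (hb : b ∈ W z S m) :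
    bplus b ≤ m := (Finset.mem_filter.mp hb).2

theorem mem_W_intro {z S : ℕ} {m : Multiset ℕ} {b : List ℕ} (hlen : b.length = z)
    (hent : ∀ x ∈ b, x ≤ S) (hble : bplus b ≤ m) : b ∈ W z S m := by
  rw [W, Finset.mem_filter, Finset.mem_image]
  refine ⟨⟨fun i => ⟨b.getD i 0, ?_⟩, Finset.mem_univ _, ?_⟩, hble⟩
  · have hmem : b.getD (i : ℕ) 0 ∈ b := by
      rw [List.getD_eq_getElem b 0 (by omega)]
      exact List.getElem_mem _
    have := hent _ hmem
    omega
  · apply List.ext_getElem (by simpa using hlen.symm)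
    intro i h1 h2
    simp only [List.getElem_ofFn]
    rw [List.getD_eq_getElem b 0 (by omega)]

theorem D {K : Type*} [Field K] (lam : List ℕ) (z : ℕ) (m : Multiset ℕ) :
    E K lam.length lam m
      = ∑ b ∈ W z m.sum m, E K (lam.length + z) (lam ++ b) (m - bplus b) := by
  apply MvPowerSeries.ext
  intro d
  rw [map_sum]
  set l := lam.length with hl
  set w := window l z d with hw
  have hsplitH : headL (l + z) d = headL l d ++ w := headL_split l z d
  have hsplitT : tailMS l d = bplus w + tailMS (l + z) d := tail_split l z d
  have hlenH : (headL l d).length = lam.length := by simp [headL, hl]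
  have key : ∀ b ∈ W z m.sum m,
      ((headL (l+z) d = lam ++ b ∧ tailMS (l+z) d = m - bplus b)
        ↔ (b = w ∧ (headL l d = lam ∧ tailMS l d = m))) := by
    intro b hb
    have hble := bplus_le_of_mem_W hb
    constructor
    · rintro ⟨h1, h2⟩
      rw [hsplitH] at h1
      obtain ⟨hh, hww⟩ := List.append_inj h1 hlenH
      refine ⟨hww.symm, hh, ?_⟩
      rw [hsplitT, hww, h2, add_comm, tsub_add_cancel_of_le hble]
    · rintro ⟨hbw, hh, ht⟩
      subst hbw
      refine ⟨by rw [hsplitH, hh], ?_⟩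
      refine eq_tsub_of_add_eq ?_
      rw [add_comm, ← hsplitT, ht]
  have hsum : ∀ b ∈ W z m.sum m,
      MvPowerSeries.coeff d (E K (l + z) (lam ++ b) (m - bplus b))
        = if b = w ∧ (headL l d = lam ∧ tailMS l d = m) then (1:K) else 0 := by
    intro b hb
    rw [coeff_E]
    exact if_congr (key b hb) rfl rfl
  rw [Finset.sum_congr rfl hsum, coeff_E]
  by_cases hc1 : headL l d = lam ∧ tailMS l d = m
  · have hwW : w ∈ W z m.sum m := by
      have hble : bplus w ≤ m := by
        rw [← hc1.2, hsplitT]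
        exact Multiset.le_add_right _ _
      apply mem_W_intro (by simp [hw, window]) ?_ hble
      intro x hx
      rcases Nat.eq_zero_or_pos x with rfl | hx0
      · exact Nat.zero_le _
      · have hxm : x ∈ m := by
          apply Multiset.mem_of_le hble
          rw [bplus, Multiset.mem_filter]
          exact ⟨Multiset.mem_coe.mpr hx, by omega⟩
        exact Multiset.le_sum_of_mem hxm
    simp only [hc1, and_true]
    rw [Finset.sum_ite_eq' (W z m.sum m) w (fun _ => (1:K)), if_pos hwW]
    simp
  · simp only [hc1, and_false, if_false, Finset.sum_const_zero]


def tmsT (k : ℕ) (T : Finset ℕ) (d : ℕ →₀ ℕ) : Multiset ℕ :=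
  ((d.support.filter fun j => k ≤ j ∧ j ∉ T).val).map d

theorem support_emd (e : Equiv.Perm ℕ) (d : ℕ →₀ ℕ) :
    (Finsupp.equivMapDomain e d).support = d.support.map e.toEmbedding := by
  ext b
  simp only [Finsupp.equivMapDomain_apply, Finsupp.mem_support_iff, Finset.mem_map,
    Equiv.toEmbedding_apply]
  constructor
  · intro h; exact ⟨e.symm b, h, by simp⟩
  · rintro ⟨a, h, rfl⟩; simpa using h

theorem S0 (e : Equiv.Perm ℕ) (d : ℕ →₀ ℕ) (P : ℕ → Prop) [DecidablePred P] :
    ((Finsupp.equivMapDomain e d).support.filter P).val.map (Finsupp.equivMapDomain e d)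
      = (d.support.filter fun x => P (e x)).val.map d := by
  rw [support_emd, Finset.filter_map]
  rw [Finset.map_val, Multiset.map_map]
  apply Multiset.map_congr rfl
  intro x hx
  simp [Finsupp.equivMapDomain_apply]

theorem S3 (s : Finset ℕ) (d : ℕ → ℕ) (p : ℕ) (hp : p ∈ s) :
    ((s.filter (· ≠ p)).val).map d = (s.val.map d).erase (d p) := by
  have h1 : (s.filter (· ≠ p)).val = s.val.erase p := by
    rw [Finset.filter_val]
    exact (s.nodup.erase_eq_filter p).symm
  have h2 : s.val = p ::ₘ s.val.erase p := (Multiset.cons_erase (by exact hp)).symm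
  rw [h1]
  conv_rhs => rw [h2]
  rw [Multiset.map_cons, Multiset.erase_cons_head]

theorem tmsT_insert (k : ℕ) (T : Finset ℕ) (d : ℕ →₀ ℕ) (q : ℕ)
    (hq : k ≤ q) (hqT : q ∉ T) (hq0 : d q ≠ 0) :
    tmsT k (insert q T) d = (tmsT k T d).erase (d q) := by
  unfold tmsT
  have hfe : (d.support.filter fun j => k ≤ j ∧ j ∉ insert q T)
      = (d.support.filter fun j => k ≤ j ∧ j ∉ T).filter (· ≠ q) := by
    rw [Finset.filter_filter]
    apply Finset.filter_congr
    intro x _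
    simp only [Finset.mem_insert]
    tauto
  rw [hfe, S3]
  simp only [Finset.mem_filter, Finsupp.mem_support_iff]
  exact ⟨hq0, hq, hqT⟩

theorem tmsT_swap (k : ℕ) (T : Finset ℕ) (d : ℕ →₀ ℕ) (p p' : ℕ)
    (hp : k ≤ p) (hp' : k ≤ p') (hpT : p ∉ T) (hp'T : p' ∉ T) (hp0 : d p ≠ 0) :
    tmsT k (insert p' T) (Finsupp.equivMapDomain (Equiv.swap p p') d)
      = (tmsT k T d).erase (d p) := by
  unfold tmsT
  rw [S0]
  have hfe : (d.support.filter fun x =>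
        k ≤ (Equiv.swap p p') x ∧ (Equiv.swap p p') x ∉ insert p' T)
      = (d.support.filter fun j => k ≤ j ∧ j ∉ T).filter (· ≠ p) := by
    rw [Finset.filter_filter]
    apply Finset.filter_congr
    intro x _
    rcases eq_or_ne x p with rfl | hxp
    · simp [Equiv.swap_apply_left, Finset.mem_insert]
    · rcases eq_or_ne x p' with rfl | hxp'
      · simp [Equiv.swap_apply_right, Finset.mem_insert, hp, hp', hpT, hp'T, hxp, Ne.symm hxp]
      · rw [Equiv.swap_apply_of_ne_of_ne hxp hxp']
        simp only [Finset.mem_insert]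
        constructor
        · intro h; exact ⟨⟨h.1, fun hT => h.2 (Or.inr hT)⟩, hxp⟩
        · intro h
          refine ⟨h.1.1, ?_⟩
          rintro (rfl | hT)
          · exact hxp' rfl
          · exact h.1.2 hT
  rw [hfe, S3]
  simp only [Finset.mem_filter, Finsupp.mem_support_iff]
  exact ⟨hp0, hp, hpT⟩


theorem L1 {K : Type*} [Field K] (f : MvPowerSeries ℕ K) (k : ℕ)
    (hsym : ∀ i : ℕ, k ≤ i → ∀ d : ℕ →₀ ℕ,
      MvPowerSeries.coeff (Finsupp.equivMapDomain (Equiv.swap i (i + 1)) d) f =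
        MvPowerSeries.coeff d f)
    (p q : ℕ) (hp : k ≤ p) (hq : k ≤ q) (d : ℕ →₀ ℕ) :
    coeff (Finsupp.equivMapDomain (Equiv.swap p q) d) f = coeff d f := by
  -- auxiliary: swap p (p+n+1)
  have aux : ∀ n : ℕ, ∀ p : ℕ, k ≤ p → ∀ d : ℕ →₀ ℕ,
      coeff (Finsupp.equivMapDomain (Equiv.swap p (p + n + 1)) d) f = coeff d f := by
    intro n
    induction n with
    | zero => intro p hp d; exact hsym p hp d
    | succ n ih =>
      intro p hp d
      set j := p + n + 1 with hj
      have hdec : Equiv.swap p (j + 1)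
          = (Equiv.swap j (j+1)).trans ((Equiv.swap p j).trans (Equiv.swap j (j+1))) := by
        apply Equiv.ext
        intro x
        simp only [Equiv.trans_apply, Equiv.swap_apply_def]
        split_ifs <;> omega
      have h1 : p + (n+1) + 1 = j + 1 := by omega
      rw [h1, hdec, Finsupp.equivMapDomain_trans, Finsupp.equivMapDomain_trans]
      rw [hsym j (by omega), ih p hp, hsym j (by omega)]
  rcases eq_or_ne p q with rfl | hne
  · rw [Equiv.swap_self]
    rw [Finsupp.equivMapDomain_refl]
  · rcases Nat.lt_or_ge p q with h | h
    · obtain ⟨n, rfl⟩ : ∃ n, q = p + n + 1 := ⟨q - p - 1, by omega⟩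
      exact aux n p hp d
    · have h' : q < p := by omega
      obtain ⟨n, rfl⟩ : ∃ n, p = q + n + 1 := ⟨p - q - 1, by omega⟩
      rw [Equiv.swap_comm]
      exact aux n q hq d


def trim (l : List ℕ) : List ℕ := l.rdropWhile (· == 0)

theorem trim_last (l : List ℕ) (h : trim l ≠ []) : (trim l).getLast h ≠ 0 := by
  have := List.rdropWhile_last_not (· == 0) l h
  simp at this; exact this

theorem trim_length_le (l : List ℕ) : (trim l).length ≤ l.length :=
  (List.rdropWhile_prefix _ _).length_le

theorem trim_append (l : List ℕ) :
    trim l ++ List.replicate (l.length - (trim l).length) 0 = l := by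
  simp only [trim]
  have h1 : l.rdropWhile (· == 0) ++ l.rtakeWhile (· == 0) = l := by
    rw [List.rdropWhile, List.rtakeWhile, ← List.reverse_append,
      List.takeWhile_append_dropWhile, List.reverse_reverse]
  have h2 : l.rtakeWhile (· == 0) = List.replicate (l.rtakeWhile (· == 0)).length 0 := by
    rw [List.eq_replicate_iff]
    exact ⟨rfl, fun b hb => by simpa using List.mem_rtakeWhile_imp hb⟩
  have h3 : (l.rtakeWhile (· == 0)).length
      = l.length - (l.rdropWhile (· == 0)).length := by
    have := congrArg List.length h1
    simp only [List.length_append] at this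
    omega
  rw [← h3, ← h2, h1]

theorem trim_append_gt (lam b : List ℕ) (hb : ∃ x ∈ b, x ≠ 0) :
    lam.length < (trim (lam ++ b)).length := by
  rw [trim, List.rdropWhile, List.reverse_append, List.dropWhile_append]
  have hne : (b.reverse.dropWhile (· == 0)) ≠ [] := by
    rw [Ne, List.dropWhile_eq_nil_iff]
    push_neg
    obtain ⟨x, hx, hx0⟩ := hb
    exact ⟨x, List.mem_reverse.mpr hx, by simpa using hx0⟩
  rw [if_neg (by simpa using hne)]
  rw [List.length_reverse, List.length_append, List.length_reverse]
  have : 0 < (b.reverse.dropWhile (· == 0)).length := List.length_pos_iff.mpr hne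
  omega

theorem trim_eq_self_of_length (l : List ℕ) (h : l.length ≤ (trim l).length) :
    trim l = l := by
  have h2 := trim_append l
  have : l.length - (trim l).length = 0 := by omega
  rw [this] at h2
  simpa using h2


theorem asm_eq_E (K : Type*) [Field K] (lam mu : List ℕ) :
    asm K lam mu = E K lam.length lam ↑mu := by
  funext d
  rw [asm, E]
  refine if_congr (and_congr ?_ Iff.rfl) rfl rfl
  constructor
  · intro h
    apply List.ext_getElem (by simp [headL])
    intro i h1 h2
    simp only [headL, List.getElem_ofFn]
    exact (h i h2).symm ▸ rfl
  · intro h i hi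
    have h1 : lam.get ⟨i, hi⟩ = lam.getD i 0 := by
      rw [List.getD_eq_getElem lam 0 hi]
      rfl
    rw [h1, ← h]
    rw [List.getD_eq_getElem _ 0 (by simpa [headL] using hi)]
    simp [headL]


theorem L2 {K : Type*} [Field K] (f : MvPowerSeries ℕ K) (k : ℕ)
    (hsym : ∀ i : ℕ, k ≤ i → ∀ d : ℕ →₀ ℕ,
      MvPowerSeries.coeff (Finsupp.equivMapDomain (Equiv.swap i (i + 1)) d) f =
        MvPowerSeries.coeff d f) :
    ∀ (n : ℕ) (T : Finset ℕ) (d d' : ℕ →₀ ℕ),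
      (∀ i, i < k ∨ i ∈ T → d i = d' i) →
      tmsT k T d = tmsT k T d' → (tmsT k T d).card = n →
      coeff d f = coeff d' f := by
  intro n
  induction n with
  | zero =>
    intro T d d' hagree hm hc
    have hd' : (tmsT k T d') = 0 := by
      rw [← hm]; exact Multiset.card_eq_zero.mp hc
    have hd : (tmsT k T d) = 0 := Multiset.card_eq_zero.mp hc
    have : d = d' := by
      ext i
      by_cases h : i < k ∨ i ∈ T
      · exact hagree i h
      · push_neg at h
        have hz : ∀ (e : ℕ →₀ ℕ), tmsT k T e = 0 → e i = 0 := by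
          intro e he
          by_contra h0
          have : e i ∈ tmsT k T e := by
            apply Multiset.mem_map.mpr
            refine ⟨i, ?_, rfl⟩
            simp only [Finset.mem_val, Finset.mem_filter, Finsupp.mem_support_iff]
            exact ⟨h0, h.1, h.2⟩
          rw [he] at this
          exact absurd this (Multiset.notMem_zero _)
        rw [hz d hd, hz d' hd']
    rw [this]
  | succ n ih =>
    intro T d d' hagree hm hc
    -- pick p' in d' tail
    have hne : tmsT k T d' ≠ 0 := by
      rw [← hm]
      intro h; rw [h] at hc; simp at hc
    obtain ⟨v, hv⟩ := Multiset.exists_mem_of_ne_zero hne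
    obtain ⟨p', hp'mem, hp'v⟩ := Multiset.mem_map.mp hv
    rw [Finset.mem_val, Finset.mem_filter, Finsupp.mem_support_iff] at hp'mem
    obtain ⟨hp'0, hp'k, hp'T⟩ := hp'mem
    -- v is also in d's tail
    have hvd : v ∈ tmsT k T d := by rw [hm]; exact hv
    obtain ⟨p, hpmem, hpv⟩ := Multiset.mem_map.mp hvd
    rw [Finset.mem_val, Finset.mem_filter, Finsupp.mem_support_iff] at hpmem
    obtain ⟨hp0, hpk, hpT⟩ := hpmem
    set d2 := Finsupp.equivMapDomain (Equiv.swap p p') d with hd2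
    have hcoeff : coeff d2 f = coeff d f := L1 f k hsym p p' hpk hp'k d
    have hd2p' : d2 p' = v := by
      rw [hd2, Finsupp.equivMapDomain_apply, Equiv.symm_swap, Equiv.swap_apply_right, hpv]
    have ht2 : tmsT k (insert p' T) d2 = (tmsT k T d).erase v := by
      rw [hd2, tmsT_swap k T d p p' hpk hp'k hpT hp'T (by rw [hpv]; rw [hpv] at hp0; exact hp0), hpv]
    have ht' : tmsT k (insert p' T) d' = (tmsT k T d').erase v := by
      rw [tmsT_insert k T d' p' hp'k hp'T (by rw [hp'v]; rw [hp'v] at hp'0; exact hp'0), hp'v]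
    have hagree2 : ∀ i, i < k ∨ i ∈ insert p' T → d2 i = d' i := by
      intro i hi
      rcases eq_or_ne i p' with rfl | hip'
      · rw [hd2p', hp'v]
      · have hiT : i < k ∨ i ∈ T := by
          rcases hi with h | h
          · exact Or.inl h
          · rcases Finset.mem_insert.mp h with rfl | h
            · exact absurd rfl hip'
            · exact Or.inr h
        have hip : i ≠ p := by
          rintro rfl
          rcases hiT with h | h
          · omega
          · exact hpT h
        rw [hd2, Finsupp.equivMapDomain_apply, Equiv.symm_swap,
          Equiv.swap_apply_of_ne_of_ne hip hip']
        exact hagree i hiT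
    have hmm : tmsT k (insert p' T) d2 = tmsT k (insert p' T) d' := by
      rw [ht2, ht', hm]
    have hcard : (tmsT k (insert p' T) d2).card = n := by
      rw [ht2]
      rw [Multiset.card_erase_of_mem hvd, hc]
      rfl
    rw [← hcoeff]
    exact ih (insert p' T) d2 d' hagree2 hmm hcard



theorem E_mem {K : Type*} [Field K] (k : ℕ) :
    ∀ (z : ℕ) (l : List ℕ) (m : Multiset ℕ), l.length = k → (0:ℕ) ∉ m →
      k - (trim l).length ≤ z →
      E K k l m ∈ Submodule.span K
        { g : MvPowerSeries ℕ K | ∃ (lam : StrictComp) (mu : PartitionL),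
            lam.1.length ≤ k ∧ g = asm K lam.1 mu.1 } := by
  intro z
  induction z using Nat.strong_induction_on with
  | _ z ih =>
    intro l m hlen hm hz
    set lam := trim l with hlam
    have hll : lam.length ≤ k := hlen ▸ trim_length_le l
    set z' := k - lam.length with hz'
    have hlz : lam.length + z' = k := by omega
    -- the asm generator
    have hgen : E K lam.length lam m ∈ Submodule.span K
        { g : MvPowerSeries ℕ K | ∃ (lam : StrictComp) (mu : PartitionL),
            lam.1.length ≤ k ∧ g = asm K lam.1 mu.1 } := by
      apply Submodule.subset_span
      refine ⟨⟨lam, trim_last l⟩, ⟨m.sort (· ≥ ·), by apply Multiset.pairwise_sort, ?_⟩, hll, ?_⟩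
      · intro x hx
        have hxm : x ∈ m := (Multiset.mem_sort _).mp hx
        have : x ≠ 0 := fun h => hm (h ▸ hxm)
        omega
      · rw [asm_eq_E, Multiset.sort_eq]
    have hD := D (K := K) lam z' m
    rw [hlz] at hD
    have hb0 : List.replicate z' 0 ∈ W z' m.sum m := by
      apply mem_W_intro List.length_replicate
      · intro x hx
        rw [List.eq_of_mem_replicate hx]
        exact Nat.zero_le _
      · have : bplus (List.replicate z' 0) = 0 := by
          rw [bplus, Multiset.filter_eq_nil]
          intro a ha
          simp only [Multiset.mem_coe, List.mem_replicate] at ha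
          simp [ha.2]
        rw [this]
        exact Multiset.zero_le m
    have hterm : E K k (lam ++ List.replicate z' 0) (m - bplus (List.replicate z' 0))
        = E K k l m := by
      have h1 : lam ++ List.replicate z' 0 = l := by
        have h := trim_append l
        rw [← hlam, hlen] at h
        exact h
      have h2 : bplus (List.replicate z' 0) = 0 := by
        rw [bplus, Multiset.filter_eq_nil]
        intro a ha
        simp only [Multiset.mem_coe, List.mem_replicate] at ha
        simp [ha.2]
      rw [h1, h2, Multiset.sub_zero]
    have hsplit : ∑ b ∈ W z' m.sum m, E K k (lam ++ b) (m - bplus b)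
        = E K k l m + ∑ b ∈ (W z' m.sum m).erase (List.replicate z' 0),
            E K k (lam ++ b) (m - bplus b) := by
      rw [← Finset.add_sum_erase _ _ hb0, hterm]
    have hEeq : E K k l m = E K lam.length lam m
        - ∑ b ∈ (W z' m.sum m).erase (List.replicate z' 0),
            E K k (lam ++ b) (m - bplus b) := by
      rw [hD, hsplit]
      abel
    rw [hEeq]
    apply Submodule.sub_mem _ hgen
    apply Submodule.sum_mem
    intro b hb
    have hbW : b ∈ W z' m.sum m := Finset.mem_of_mem_erase hb
    have hbne : b ≠ List.replicate z' 0 := Finset.ne_of_mem_erase hb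
    have hblen : b.length = z' := length_of_mem_W hbW
    have hbnz : ∃ x ∈ b, x ≠ 0 := by
      by_contra hco
      push_neg at hco
      exact hbne (List.eq_replicate_iff.mpr ⟨hblen, hco⟩)
    have hgt : lam.length < (trim (lam ++ b)).length := trim_append_gt lam b hbnz
    have hlen2 : (lam ++ b).length = k := by
      rw [List.length_append, hblen]; omega
    have hz'pos : 1 ≤ z' := by
      obtain ⟨x, hx, _⟩ := hbnz
      have := List.length_pos_iff.mpr (List.ne_nil_of_mem hx)
      omega
    have hmeas : k - (trim (lam ++ b)).length ≤ z' - 1 := by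
      omega
    have hzlt : z' - 1 < z := by omega
    have hm2 : (0:ℕ) ∉ m - bplus b := by
      intro h0
      exact hm (Multiset.mem_of_le (Multiset.sub_le_self _ _) h0)
    exact ih (z' - 1) hzlt (lam ++ b) (m - bplus b) hlen2 hm2 hmeas

theorem tmsT_empty (k : ℕ) (d : ℕ →₀ ℕ) : tmsT k ∅ d = tailMS k d := by
  unfold tmsT tailMS
  congr 1
  ext j
  simp

theorem headL_apply_eq {k : ℕ} {d d' : ℕ →₀ ℕ} (h : headL k d = headL k d')
    (i : ℕ) (hi : i < k) : d i = d' i := by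
  have h1 : ∀ e : ℕ →₀ ℕ, (headL k e).getD i 0 = e i := by
    intro e
    rw [List.getD_eq_getElem _ 0 (by simpa [headL] using hi)]
    simp [headL]
  rw [← h1 d, ← h1 d', h]

theorem pad_filter (t : Multiset ℕ) (D : ℕ) (hc : Multiset.card t ≤ D) (h0 : (0:ℕ) ∉ t) :
    Multiset.filter (· ≠ 0) ↑(List.ofFn fun i : Fin D => t.toList.getD ↑i 0) = t := by
  have hlist : (List.ofFn fun i : Fin D => t.toList.getD ↑i 0)
      = t.toList ++ List.replicate (D - Multiset.card t) 0 := by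
    apply List.ext_getElem
    · simp [Multiset.length_toList]
      omega
    · intro i h1 h2
      simp only [List.getElem_ofFn]
      by_cases hi : i < Multiset.card t
      · rw [List.getD_eq_getElem _ 0 (by rw [Multiset.length_toList]; exact hi),
          List.getElem_append_left (by rw [Multiset.length_toList]; exact hi)]
      · rw [List.getD_eq_default _ 0 (by rw [Multiset.length_toList]; omega),
          List.getElem_append_right (by rw [Multiset.length_toList]; omega)]
        simp
  rw [hlist, ← Multiset.coe_add]
  rw [Multiset.filter_add]
  have hA : Multiset.filter (· ≠ 0) (↑t.toList : Multiset ℕ) = t := by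
    rw [Multiset.coe_toList]
    apply Multiset.filter_eq_self.mpr
    intro a ha
    exact fun h => h0 (h ▸ ha)
  have hB : Multiset.filter (· ≠ 0) (↑(List.replicate (D - Multiset.card t) 0) : Multiset ℕ)
      = 0 := by
    rw [Multiset.filter_eq_nil]
    intro a ha
    simp only [Multiset.mem_coe, List.mem_replicate] at ha
    simp [ha.2]
  rw [hA, hB, add_zero]

end AsmAux

/-- Let `f ∈ MvPowerSeries ℕ K` have bounded total degree and be almost symmetric of level
`k` (i.e. invariant under the transpositions `σ_i = (i, i+1)` of the variables for all
`i ≥ k`).  Then `f` lies in the `K`-linear span of the almost symmetric monomials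
`m_{(λ|μ)}`, with all the strict compositions `λ` occurring of length at most `k`. -/
theorem statement11 (K : Type*) [Field K] (f : MvPowerSeries ℕ K) (k : ℕ)
    (hbd : ∃ D : ℕ, ∀ d : ℕ →₀ ℕ,
      MvPowerSeries.coeff d f ≠ 0 → (d.sum fun _ n => n) ≤ D)
    (hsym : ∀ i : ℕ, k ≤ i → ∀ d : ℕ →₀ ℕ,
      MvPowerSeries.coeff (Finsupp.equivMapDomain (Equiv.swap i (i + 1)) d) f =
        MvPowerSeries.coeff d f) :
    f ∈ Submodule.span K
      { g : MvPowerSeries ℕ K | ∃ (lam : StrictComp) (mu : PartitionL),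
          lam.1.length ≤ k ∧ g = asm K lam.1 mu.1 } := by
  classical
  obtain ⟨D, hD⟩ := hbd
  set A : Finset (List ℕ × Multiset ℕ) :=
    Finset.image (fun u : (Fin k → Fin (D+1)) × (Fin D → Fin (D+1)) =>
      ((List.ofFn fun i => (u.1 i : ℕ)),
        Multiset.filter (· ≠ 0) ↑(List.ofFn fun i => (u.2 i : ℕ)))) Finset.univ with hA
  set g : List ℕ × Multiset ℕ → K := fun x =>
    if h : ∃ e : ℕ →₀ ℕ, AsmAux.headL k e = x.1 ∧ AsmAux.tailMS k e = x.2 then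
      MvPowerSeries.coeff h.choose f else 0 with hg
  have hclass : ∀ d d' : ℕ →₀ ℕ, AsmAux.headL k d = AsmAux.headL k d' →
      AsmAux.tailMS k d = AsmAux.tailMS k d' →
      MvPowerSeries.coeff d f = MvPowerSeries.coeff d' f := by
    intro d d' hh ht
    apply AsmAux.L2 f k hsym (Multiset.card (AsmAux.tmsT k ∅ d)) ∅ d d' ?_ ?_ rfl
    · intro i hi
      rcases hi with hi | hi
      · exact AsmAux.headL_apply_eq hh i hi
      · simp at hi
    · rw [AsmAux.tmsT_empty, AsmAux.tmsT_empty, ht]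
  have hf : f = ∑ x ∈ A, g x • AsmAux.E K k x.1 x.2 := by
    apply MvPowerSeries.ext
    intro d
    rw [map_sum]
    have hsummand : ∀ x ∈ A, MvPowerSeries.coeff d (g x • AsmAux.E K k x.1 x.2)
        = if x = (AsmAux.headL k d, AsmAux.tailMS k d) then g x else 0 := by
      intro x hx
      rw [LinearMap.map_smul, smul_eq_mul, AsmAux.coeff_E, mul_ite, mul_one, mul_zero]
      apply if_congr ?_ rfl rfl
      rw [Prod.ext_iff]
      constructor
      · rintro ⟨h1, h2⟩; exact ⟨h1.symm, h2.symm⟩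
      · rintro ⟨h1, h2⟩; exact ⟨h1.symm, h2.symm⟩
    rw [Finset.sum_congr rfl hsummand,
      Finset.sum_ite_eq' A (AsmAux.headL k d, AsmAux.tailMS k d) g]
    by_cases hmem : (AsmAux.headL k d, AsmAux.tailMS k d) ∈ A
    · rw [if_pos hmem, hg]
      have hex : ∃ e : ℕ →₀ ℕ, AsmAux.headL k e = AsmAux.headL k d ∧
          AsmAux.tailMS k e = AsmAux.tailMS k d := ⟨d, rfl, rfl⟩
      dsimp only
      rw [dif_pos hex]
      exact (hclass _ _ hex.choose_spec.1 hex.choose_spec.2).symm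
    · rw [if_neg hmem]
      by_contra h0
      apply hmem
      have hsum : (d.sum fun _ n => n) ≤ D := hD d h0
      rw [Finsupp.sum] at hsum
      have hid : ∀ i, d i ≤ D := by
        intro i
        by_cases h : d i = 0
        · omega
        · exact le_trans (Finset.single_le_sum (f := fun j => d j)
            (fun _ _ => Nat.zero_le _) (Finsupp.mem_support_iff.mpr h)) hsum
      have h0t : (0:ℕ) ∉ AsmAux.tailMS k d := by
        intro hmem0
        obtain ⟨j, hj, hj0⟩ := Multiset.mem_map.mp hmem0
        rw [Finset.mem_val, Finset.mem_filter, Finsupp.mem_support_iff] at hj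
        exact hj.1 hj0
      have htsum : (AsmAux.tailMS k d).sum ≤ D := by
        have h1 : (AsmAux.tailMS k d).sum
            = ∑ j ∈ (d.support.filter fun j => k ≤ j), d j := rfl
        rw [h1]
        exact le_trans (Finset.sum_le_sum_of_subset (Finset.filter_subset _ _)) hsum
      have hone : ∀ x ∈ AsmAux.tailMS k d, 1 ≤ x := by
        intro x hx
        have : x ≠ 0 := fun h => h0t (h ▸ hx)
        omega
      have hcard : Multiset.card (AsmAux.tailMS k d) ≤ D := by
        calc Multiset.card (AsmAux.tailMS k d)
            = ((AsmAux.tailMS k d).map (fun _ => 1)).sum := by simp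
          _ ≤ (AsmAux.tailMS k d).sum := Multiset.sum_map_le_sum _ hone
          _ ≤ D := htsum
      rw [hA]
      apply Finset.mem_image.mpr
      refine ⟨(fun i => ⟨d i, by have := hid i; omega⟩,
        fun i => ⟨(AsmAux.tailMS k d).toList.getD ↑i 0, ?_⟩), Finset.mem_univ _, ?_⟩
      · by_cases hi : (i:ℕ) < Multiset.card (AsmAux.tailMS k d)
        · have hget : (AsmAux.tailMS k d).toList.getD ↑i 0 ∈ (AsmAux.tailMS k d).toList := by
            rw [List.getD_eq_getElem _ 0 (by rw [Multiset.length_toList]; exact hi)]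
            exact List.getElem_mem _
          have hmem2 : (AsmAux.tailMS k d).toList.getD ↑i 0 ∈ AsmAux.tailMS k d :=
            Multiset.mem_toList.mp hget
          have := le_trans (Multiset.le_sum_of_mem hmem2) htsum
          omega
        · rw [List.getD_eq_default _ 0 (by rw [Multiset.length_toList]; omega)]
          omega
      · refine Prod.ext ?_ ?_
        · rfl
        · exact AsmAux.pad_filter (AsmAux.tailMS k d) D hcard h0t
  rw [hf]
  apply Submodule.sum_mem
  intro x hx
  apply Submodule.smul_mem
  rw [hA] at hx
  obtain ⟨u, _, rfl⟩ := Finset.mem_image.mp hx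
  have hlen : (List.ofFn fun i => (u.1 i : ℕ)).length = k := by simp
  have h0x : (0:ℕ) ∉ Multiset.filter (· ≠ 0) (↑(List.ofFn fun i => (u.2 i : ℕ)) : Multiset ℕ) := by
    intro h
    exact (Multiset.of_mem_filter h) rfl
  exact AsmAux.E_mem k k _ _ hlen h0x (Nat.sub_le _ _)


end
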